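/- Assume λ > 0. The point (0,0,0) (zero vector b, zero vector z, zero matrix B) is an optimal solution to the SDP relaxation if and only if there exists δ ∈ ℝ^p such that XᵀX − diag(δ) ⪰ 0 and for every i, δᵢ ≥ 0, 2λδᵢ ≥ (Xᵀy)ᵢ². -/

import Mathlib

open Matrix Finset

/-- Feasibility in the SDP relaxation. -/
def SDPfeas {p : ℕ} (b z : Fin p → ℝ) (B : Matrix (Fin p) (Fin p) ℝ) : Prop :=
  (B - Matrix.vecMulVec b b).PosSemidef ∧
    ∀ i, (!![z i, b i; b i, B i i] : Matrix (Fin 2) (Fin 2) ℝ).PosSemidef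

/-- Objective of the SDP relaxation. -/
noncomputable def sdpObj {n p : ℕ} (X : Matrix (Fin n) (Fin p) ℝ) (y : Fin n → ℝ)
    (lam : ℝ) (b z : Fin p → ℝ) (B : Matrix (Fin p) (Fin p) ℝ) : ℝ :=
  (1/2) * ∑ i, ∑ j, (Xᵀ * X) i j * B i j - y ⬝ᵥ X.mulVec b
    + (1/2) * (y ⬝ᵥ y) + lam * ∑ i, z i


lemma psd_smul {p : ℕ} {A : Matrix (Fin p) (Fin p) ℝ} (hA : A.PosSemidef) {r : ℝ} (hr : 0 ≤ r) :
    (r • A).PosSemidef := by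
  refine Matrix.PosSemidef.of_dotProduct_mulVec_nonneg (by rw [Matrix.IsHermitian, Matrix.conjTranspose_smul, star_trivial, hA.1]) fun x => ?_
  have h := hA.dotProduct_mulVec_nonneg x
  simp only [smul_mulVec, dotProduct_smul, smul_eq_mul]
  exact mul_nonneg hr h

lemma vecMulVec_psd {p : ℕ} (v : Fin p → ℝ) : (Matrix.vecMulVec v v).PosSemidef := by
  refine Matrix.PosSemidef.of_dotProduct_mulVec_nonneg ?_ ?_
  · ext i j; simp [Matrix.conjTranspose_apply, Matrix.vecMulVec_apply, mul_comm]
  · intro x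
    have hq : star x ⬝ᵥ (Matrix.vecMulVec v v) *ᵥ x = (v ⬝ᵥ x) * (v ⬝ᵥ x) := by
      simp only [dotProduct, Matrix.mulVec, Matrix.vecMulVec_apply, star_trivial]
      rw [Finset.sum_mul]
      apply Finset.sum_congr rfl; intro i _
      rw [Finset.mul_sum, Finset.mul_sum]
      apply Finset.sum_congr rfl; intro j _; ring
    rw [hq]; exact mul_self_nonneg _

lemma eps_limit {K C : ℝ} (h : ∀ ε : ℝ, 0 < ε → 0 ≤ K + ε * C) : 0 ≤ K := by
  by_contra h'
  push_neg at h'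
  rcases le_or_gt C 0 with hC | hC
  · have := h 1 one_pos; nlinarith
  · have := h (-K/(2*C)) (div_pos (by linarith) (by linarith))
    have h2 : (-K/(2*C)) * C = -K/2 := by field_simp
    nlinarith

lemma key1 {lam δ z Bii b c : ℝ} (hlam : 0 < lam) (hδ : 0 ≤ δ) (hz : 0 ≤ z) (hB : 0 ≤ Bii)
    (hb : b^2 ≤ z*Bii) (hc : c^2 ≤ 2*lam*δ) : c*b ≤ (1/2)*(δ*Bii) + lam*z := by
  nlinarith [sq_nonneg (δ*Bii - 2*lam*z), mul_nonneg hδ hB, mul_nonneg hlam.le hz,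
    mul_le_mul hc hb (sq_nonneg b) (by positivity : (0:ℝ) ≤ 2*lam*δ), sq_nonneg (c*b),
    sq_nonneg (δ*Bii + 2*lam*z), mul_nonneg (mul_nonneg hlam.le hδ) (mul_nonneg hz hB)]

lemma psd2 (a b d : ℝ) (ha : 0 ≤ a) (hd : 0 ≤ d) (h : b^2 ≤ a*d) :
    (!![a,b;b,d] : Matrix (Fin 2) (Fin 2) ℝ).PosSemidef := by
  refine Matrix.PosSemidef.of_dotProduct_mulVec_nonneg ?_ ?_
  · ext i j; fin_cases i <;> fin_cases j <;> simp [Matrix.conjTranspose_apply]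
  · intro x
    have hq : star x ⬝ᵥ (!![a,b;b,d] : Matrix (Fin 2) (Fin 2) ℝ) *ᵥ x
        = a * (x 0)^2 + 2*b*(x 0)*(x 1) + d*(x 1)^2 := by
      simp [dotProduct, Matrix.mulVec, Fin.sum_univ_two]; ring
    rw [hq]
    rcases eq_or_lt_of_le ha with h0 | h0
    · have hb : b = 0 := by nlinarith [sq_nonneg b]
      rw [← h0, hb]; simp; positivity
    · nlinarith [sq_nonneg (a*(x 0) + b*(x 1)), mul_nonneg (sub_nonneg.2 h) (sq_nonneg (x 1))]

lemma psd2_extract {a b d : ℝ} (h : (!![a,b;b,d] : Matrix (Fin 2) (Fin 2) ℝ).PosSemidef) :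
    0 ≤ a ∧ 0 ≤ d ∧ b^2 ≤ a*d := by
  have q : ∀ s t : ℝ, 0 ≤ a*s^2 + 2*b*s*t + d*t^2 := by
    intro s t
    have h2 := h.dotProduct_mulVec_nonneg ![s, t]
    have he : star (![s,t] : Fin 2 → ℝ) ⬝ᵥ (!![a,b;b,d] : Matrix (Fin 2) (Fin 2) ℝ) *ᵥ ![s,t]
        = a*s^2 + 2*b*s*t + d*t^2 := by
      simp [dotProduct, Matrix.mulVec, Fin.sum_univ_two]; ring
    linarith [he ▸ h2]
  have ha : 0 ≤ a := by have := q 1 0; linarith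
  have hd : 0 ≤ d := by have := q 0 1; linarith
  refine ⟨ha, hd, ?_⟩
  rcases eq_or_lt_of_le ha with h0 | h0
  · have hb : b = 0 := by
      by_contra hb
      have h1 := q (-(d+1)/(2*b)) 1
      have h2 : 2*b*(-(d+1)/(2*b)) = -(d+1) := by field_simp
      rw [← h0] at h1
      nlinarith
    rw [hb]; rw [← h0]; simp
  · have := q (-b) a
    nlinarith

lemma sum_vecMulVec {p : ℕ} (M : Matrix (Fin p) (Fin p) ℝ) (u : Fin p → ℝ) :
    ∑ i, ∑ j, M i j * vecMulVec u u i j = u ⬝ᵥ M *ᵥ u := by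
  simp only [vecMulVec_apply, dotProduct, mulVec]
  apply Finset.sum_congr rfl; intro i _
  rw [Finset.mul_sum]
  apply Finset.sum_congr rfl; intro j _
  ring

lemma sum_diagonal_mul {p : ℕ} (δ : Fin p → ℝ) (B : Matrix (Fin p) (Fin p) ℝ) :
    ∑ i, ∑ j, (Matrix.diagonal δ) i j * B i j = ∑ i, δ i * B i i := by
  apply Finset.sum_congr rfl; intro i _
  rw [Finset.sum_eq_single i]
  · simp [Matrix.diagonal_apply]
  · intro j _ hj; simp [Matrix.diagonal_apply, Ne.symm hj]
  · simp

lemma sum_one_mul {p : ℕ} (M : Matrix (Fin p) (Fin p) ℝ) :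
    ∑ i, ∑ j, M i j * (1 : Matrix (Fin p) (Fin p) ℝ) i j = ∑ i, M i i := by
  apply Finset.sum_congr rfl; intro i _
  rw [Finset.sum_eq_single i]
  · simp [Matrix.one_apply]
  · intro j _ hj; simp [Matrix.one_apply, Ne.symm hj]
  · simp

lemma psd_exists_factor {p : ℕ} {B : Matrix (Fin p) (Fin p) ℝ} (hB : B.PosSemidef) :
    ∃ C : Matrix (Fin p) (Fin p) ℝ, B = Cᴴ * C := by
  open MatrixOrder in
  obtain ⟨X, hX, -, hXB⟩ :=
    CFC.exists_sqrt_of_isSelfAdjoint_of_quasispectrumRestricts hB.isHermitian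
      (QuasispectrumRestricts.nnreal_of_nonneg hB.nonneg)
  refine ⟨X, ?_⟩
  rw [← hXB]
  change X * X = star X * X
  rw [hX.star_eq]

lemma sum_mul_psd_nonneg {p : ℕ} {A B : Matrix (Fin p) (Fin p) ℝ}
    (hA : A.PosSemidef) (hB : B.PosSemidef) : 0 ≤ ∑ i, ∑ j, A i j * B i j := by
  obtain ⟨C, rfl⟩ := psd_exists_factor hB
  have key : ∑ i, ∑ j, A i j * (Cᴴ * C) i j
      = ∑ k, (fun i => C k i) ⬝ᵥ A *ᵥ (fun i => C k i) := by
    calc ∑ i, ∑ j, A i j * (Cᴴ * C) i j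
        = ∑ i, ∑ j, ∑ k, C k i * (A i j * C k j) := by
          simp only [Matrix.mul_apply, Matrix.conjTranspose_apply, star_trivial]
          apply Finset.sum_congr rfl; intro i _
          apply Finset.sum_congr rfl; intro j _
          rw [Finset.mul_sum]
          apply Finset.sum_congr rfl; intro k _; ring
      _ = ∑ i, ∑ k, ∑ j, C k i * (A i j * C k j) :=
          Finset.sum_congr rfl fun i _ => Finset.sum_comm
      _ = ∑ k, ∑ i, ∑ j, C k i * (A i j * C k j) := Finset.sum_comm
      _ = ∑ k, (fun i => C k i) ⬝ᵥ A *ᵥ (fun i => C k i) := by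
          simp only [dotProduct, mulVec]
          apply Finset.sum_congr rfl; intro k _
          apply Finset.sum_congr rfl; intro i _
          rw [Finset.mul_sum]
  rw [key]
  apply Finset.sum_nonneg
  intro k _
  simpa using hA.dotProduct_mulVec_nonneg (fun i => C k i)

/-- `(0,0,0)` is optimal for the SDP relaxation iff there is `δ`
with `XᵀX − diag(δ) ⪰ 0`, `δᵢ ≥ 0` and `2λδᵢ ≥ (Xᵀy)ᵢ²` for all `i`. -/
theorem stmt14 (n p : ℕ) (X : Matrix (Fin n) (Fin p) ℝ) (y : Fin n → ℝ)
    (lam : ℝ) (hlam : 0 < lam) (hpd : (Xᵀ * X).PosDef) :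
    (SDPfeas (0 : Fin p → ℝ) 0 0 ∧
      ∀ (b z : Fin p → ℝ) (B : Matrix (Fin p) (Fin p) ℝ), SDPfeas b z B →
        sdpObj X y lam (0 : Fin p → ℝ) 0 0 ≤ sdpObj X y lam b z B)
    ↔ ∃ δ : Fin p → ℝ, (Xᵀ * X - Matrix.diagonal δ).PosSemidef ∧
        ∀ i, 0 ≤ δ i ∧ (Xᵀ.mulVec y i)^2 ≤ 2 * lam * δ i := by
  have hobj0 : sdpObj X y lam (0 : Fin p → ℝ) 0 0 = (1/2) * (y ⬝ᵥ y) := by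
    simp [sdpObj]
  have hobj : ∀ (b z : Fin p → ℝ) (B : Matrix (Fin p) (Fin p) ℝ),
      sdpObj X y lam b z B = (1/2) * ∑ i, ∑ j, (Xᵀ * X) i j * B i j
        - (Xᵀ *ᵥ y) ⬝ᵥ b + (1/2) * (y ⬝ᵥ y) + lam * ∑ i, z i := by
    intro b z B
    rw [sdpObj, Matrix.dotProduct_mulVec, ← Matrix.mulVec_transpose]
  set M := Xᵀ * X with hMdef
  set c := Xᵀ *ᵥ y with hcdef
  clear_value M c
  constructor
  · rintro ⟨hfeas0, hopt⟩
    -- key claim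
    have main : ∀ v : Fin p → ℝ, (∑ i, (c i)^2 * (v i)^2) / (2*lam) ≤ v ⬝ᵥ M *ᵥ v := by
      intro v
      set S := ∑ i, (c i)^2 * (v i)^2 with hSdef
      have hS : 0 ≤ S := Finset.sum_nonneg fun i _ => by positivity
      set w : Fin p → ℝ := fun i => c i * (v i)^2 / (2*lam) with hwdef
      have hK : 0 ≤ (1/2)*(v ⬝ᵥ M *ᵥ v) - S/(4*lam) := by
        apply eps_limit (C := (1/2)*(w ⬝ᵥ M *ᵥ w + ∑ i, M i i))
        intro ε hε
        set b : Fin p → ℝ := ε • w with hbdef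
        set Bm : Matrix (Fin p) (Fin p) ℝ :=
          vecMulVec b b + ε • vecMulVec v v + (ε^2) • (1 : Matrix (Fin p) (Fin p) ℝ) with hBmdef
        have hBii : ∀ i, Bm i i = ε^2*(w i)^2 + ε*(v i)^2 + ε^2 := by
          intro i
          simp [hBmdef, Matrix.add_apply, Matrix.smul_apply, Matrix.vecMulVec_apply,
            Matrix.one_apply_eq, hbdef, smul_eq_mul]
          ring
        have hBpos : ∀ i, 0 < Bm i i := by
          intro i; rw [hBii]; positivity
        set zv : Fin p → ℝ := fun i => (b i)^2 / (Bm i i) with hzvdef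
        have hfeas : SDPfeas b zv Bm := by
          constructor
          · have hsub : Bm - vecMulVec b b = ε • vecMulVec v v + (ε^2) • (1 : Matrix (Fin p) (Fin p) ℝ) := by
              rw [hBmdef]; abel
            rw [hsub]
            exact (psd_smul (vecMulVec_psd v) hε.le).add (psd_smul Matrix.PosSemidef.one (by positivity))
          · intro i
            apply psd2
            · have := hBpos i; positivity
            · exact (hBpos i).le
            · rw [hzvdef]
              rw [div_mul_cancel₀ _ (hBpos i).ne']
        have h1 := hopt b zv Bm hfeas
        rw [hobj0, hobj] at h1
        have hG : 0 ≤ (1/2) * ∑ i, ∑ j, M i j * Bm i j - c ⬝ᵥ b + lam * ∑ i, zv i := by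
          linarith
        -- compute the double sum
        have hsum : ∑ i, ∑ j, M i j * Bm i j
            = b ⬝ᵥ M *ᵥ b + ε * (v ⬝ᵥ M *ᵥ v) + ε^2 * ∑ i, M i i := by
          have expand : ∀ i j, M i j * Bm i j
              = M i j * vecMulVec b b i j + ε * (M i j * vecMulVec v v i j)
                + ε^2 * (M i j * (1 : Matrix (Fin p) (Fin p) ℝ) i j) := by
            intro i j
            simp [hBmdef, Matrix.add_apply, Matrix.smul_apply, smul_eq_mul]
            ring
          calc ∑ i, ∑ j, M i j * Bm i j
              = ∑ i, ∑ j, (M i j * vecMulVec b b i j + ε * (M i j * vecMulVec v v i j)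
                + ε^2 * (M i j * (1 : Matrix (Fin p) (Fin p) ℝ) i j)) := by
                apply Finset.sum_congr rfl; intro i _
                apply Finset.sum_congr rfl; intro j _
                exact expand i j
            _ = (∑ i, ∑ j, M i j * vecMulVec b b i j)
                + ε * (∑ i, ∑ j, M i j * vecMulVec v v i j)
                + ε^2 * (∑ i, ∑ j, M i j * (1 : Matrix (Fin p) (Fin p) ℝ) i j) := by
                simp only [Finset.sum_add_distrib, ← Finset.mul_sum]
            _ = b ⬝ᵥ M *ᵥ b + ε * (v ⬝ᵥ M *ᵥ v) + ε^2 * ∑ i, M i i := by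
                rw [sum_vecMulVec, sum_vecMulVec, sum_one_mul]
        have hbMb : b ⬝ᵥ M *ᵥ b = ε^2 * (w ⬝ᵥ M *ᵥ w) := by
          rw [hbdef, Matrix.mulVec_smul, smul_dotProduct, dotProduct_smul]
          simp [smul_eq_mul]; ring
        have hcb : c ⬝ᵥ b = ε * (S/(2*lam)) := by
          rw [hbdef, dotProduct_smul]
          have : c ⬝ᵥ w = S/(2*lam) := by
            rw [hSdef, Finset.sum_div]
            simp only [dotProduct, hwdef]
            apply Finset.sum_congr rfl; intro i _
            field_simp
          rw [this]; simp [smul_eq_mul]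
        have hzb : lam * ∑ i, zv i ≤ ε * (S/(4*lam)) := by
          have hz_bound : ∀ i, zv i ≤ ε * ((c i)^2*(v i)^2) / (4*lam^2) := by
            intro i
            rw [hzvdef]
            rw [div_le_iff₀ (hBpos i), hBii i]
            have hbi : b i = ε * w i := by rw [hbdef]; simp [smul_eq_mul]
            rw [hbi]
            have hWi : w i = c i * (v i)^2/(2*lam) := by rw [hwdef]
            have h1 : ε * ((c i)^2*(v i)^2) / (4*lam^2) * (ε*(v i)^2) = (ε * w i)^2 := by
              rw [hWi]; field_simp; ring
            have h2 : (0:ℝ) ≤ ε * ((c i)^2*(v i)^2) / (4*lam^2) := by positivity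
            nlinarith [mul_nonneg h2 (by positivity : (0:ℝ) ≤ ε^2*(w i)^2 + ε^2)]
          have hsum_le : ∑ i, zv i ≤ ∑ i, ε * ((c i)^2*(v i)^2) / (4*lam^2) :=
            Finset.sum_le_sum fun i _ => hz_bound i
          have heq : ∑ i, ε * ((c i)^2*(v i)^2) / (4*lam^2) = ε * S / (4*lam^2) := by
            rw [hSdef, ← Finset.sum_div, ← Finset.mul_sum]
          have : lam * ∑ i, zv i ≤ lam * (ε * S / (4*lam^2)) := by
            apply mul_le_mul_of_nonneg_left _ hlam.le
            rw [← heq]; exact hsum_le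
          have heq2 : lam * (ε * S / (4*lam^2)) = ε * (S/(4*lam)) := by
            field_simp
          linarith [heq2 ▸ this]
        -- assemble
        have final : 0 ≤ ε * ((1/2)*(v ⬝ᵥ M *ᵥ v) - S/(4*lam)
            + ε * ((1/2)*(w ⬝ᵥ M *ᵥ w + ∑ i, M i i))) := by
          have : (1/2) * ∑ i, ∑ j, M i j * Bm i j - c ⬝ᵥ b + lam * ∑ i, zv i
              ≤ ε * ((1/2)*(v ⬝ᵥ M *ᵥ v) - S/(4*lam)
                + ε * ((1/2)*(w ⬝ᵥ M *ᵥ w + ∑ i, M i i))) := by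
            rw [hsum, hbMb, hcb]
            have hcb2 : ε * (S / (2 * lam)) = ε * (S / (4 * lam)) + ε * (S / (4 * lam)) := by
              field_simp; ring
            rw [hcb2]
            linarith [hzb]
          linarith
        by_contra hlt
        push_neg at hlt
        have := mul_neg_of_pos_of_neg hε hlt
        linarith
      have hhalf : S/(2*lam) = 2 * (S/(4*lam)) := by field_simp; ring
      linarith
    refine ⟨fun i => (c i)^2/(2*lam), Matrix.PosSemidef.of_dotProduct_mulVec_nonneg ?_ ?_, fun i => ⟨by positivity, by field_simp; exact le_rfl⟩⟩
    · exact hpd.1.sub (Matrix.isHermitian_diagonal _)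
    · intro x
      have hdiag : x ⬝ᵥ (Matrix.diagonal (fun i => (c i)^2/(2*lam)) *ᵥ x)
          = (∑ i, (c i)^2 * (x i)^2) / (2*lam) := by
        rw [Finset.sum_div]
        simp only [dotProduct, Matrix.mulVec_diagonal]
        apply Finset.sum_congr rfl; intro i _
        field_simp
      have hq : star x ⬝ᵥ (M - Matrix.diagonal (fun i => (c i)^2/(2*lam))) *ᵥ x
          = x ⬝ᵥ M *ᵥ x - x ⬝ᵥ (Matrix.diagonal (fun i => (c i)^2/(2*lam)) *ᵥ x) := by
        rw [Matrix.sub_mulVec, dotProduct_sub]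
        simp
      rw [hq, hdiag]
      have := main x
      linarith
  · rintro ⟨δ, hpsd, hδ⟩
    constructor
    · constructor
      · have h0 : Matrix.vecMulVec (0 : Fin p → ℝ) (0 : Fin p → ℝ)
            = (0 : Matrix (Fin p) (Fin p) ℝ) := by
          ext i j; simp [Matrix.vecMulVec_apply]
        rw [h0, sub_zero]
        exact Matrix.PosSemidef.zero
      · intro i
        simp only [Pi.zero_apply, Matrix.zero_apply]
        exact psd2 0 0 0 le_rfl le_rfl (by norm_num)
    · intro b z B hfeas
      rw [hobj0, hobj]
      obtain ⟨hfeas1, hfeas2⟩ := hfeas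
      have hext : ∀ i, 0 ≤ z i ∧ 0 ≤ B i i ∧ (b i)^2 ≤ z i * B i i := fun i => psd2_extract (hfeas2 i)
      -- split the double sum
      have hsplit : ∑ i, ∑ j, M i j * B i j
          = (∑ i, ∑ j, (M - Matrix.diagonal δ) i j * (B - vecMulVec b b) i j)
            + (∑ i, ∑ j, (M - Matrix.diagonal δ) i j * vecMulVec b b i j)
            + (∑ i, ∑ j, (Matrix.diagonal δ) i j * B i j) := by
        rw [← Finset.sum_add_distrib, ← Finset.sum_add_distrib]
        apply Finset.sum_congr rfl; intro i _
        rw [← Finset.sum_add_distrib, ← Finset.sum_add_distrib]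
        apply Finset.sum_congr rfl; intro j _
        simp only [Matrix.sub_apply]
        ring
      have t1 : 0 ≤ ∑ i, ∑ j, (M - Matrix.diagonal δ) i j * (B - vecMulVec b b) i j :=
        sum_mul_psd_nonneg hpsd hfeas1
      have t2 : 0 ≤ ∑ i, ∑ j, (M - Matrix.diagonal δ) i j * vecMulVec b b i j := by
        rw [sum_vecMulVec]
        simpa using hpsd.dotProduct_mulVec_nonneg b
      have t3 : ∑ i, ∑ j, (Matrix.diagonal δ) i j * B i j = ∑ i, δ i * B i i :=
        sum_diagonal_mul δ B
      have hdot : c ⬝ᵥ b = ∑ i, c i * b i := rfl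
      have key : c ⬝ᵥ b ≤ (1/2) * (∑ i, δ i * B i i) + lam * ∑ i, z i := by
        rw [hdot, Finset.mul_sum, Finset.mul_sum, ← Finset.sum_add_distrib]
        apply Finset.sum_le_sum
        intro i _
        obtain ⟨hz, hB, hb⟩ := hext i
        exact key1 hlam (hδ i).1 hz hB hb (hδ i).2
      have hsum_ge : (1/2) * ∑ i, ∑ j, M i j * B i j ≥ (1/2) * ∑ i, δ i * B i i := by
        rw [hsplit, t3]; linarith
      linarith
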